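/- arXiv:2005.12229 — 2 statements merged into one kernel-verified Lean document; each statement's English description precedes it below -/
import Mathlib

section
/- Let (M_n)_{n∈ℕ} be (d+1)×(d+1) integer matrices with nonnegative entries and determinant ±1, and let v ∈ ℝ^{d+1} have nonnegative coordinates and ‖v‖₁ = 1. If the series Σ_n ‖π_v M_{[0,n)}‖₁ of operator norms converges, then ⋂_{n∈ℕ} M_{[0,n)}(ℝ_{≥0}^{d+1}) = {t·v : t ≥ 0}. -/
/-- `prodM M k n = M_k * M_{k+1} * ⋯ * M_{n-1}` (the identity when `n ≤ k`). -/
def prodM {d : ℕ} (M : ℕ → Matrix (Fin (d + 1)) (Fin (d + 1)) ℤ) (k n : ℕ) :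
    Matrix (Fin (d + 1)) (Fin (d + 1)) ℤ :=
  ((List.range' k (n - k)).map M).prod

/-- The projection `π_y : z ↦ z - (h(z)/h(y)) • y` onto `P = {h = 0}`, as a linear map. -/
noncomputable def projL {d : ℕ} (y : Fin (d + 1) → ℝ) :
    (Fin (d + 1) → ℝ) →ₗ[ℝ] (Fin (d + 1) → ℝ) :=
  LinearMap.id - (∑ i, y i)⁻¹ •
    LinearMap.smulRight (∑ i, LinearMap.proj i : (Fin (d + 1) → ℝ) →ₗ[ℝ] ℝ) y

/-- The operator norm induced by the norm `‖z‖₁ = ∑ i, |z i|`. -/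
noncomputable def opNorm1 {d : ℕ} (f : (Fin (d + 1) → ℝ) →ₗ[ℝ] (Fin (d + 1) → ℝ)) : ℝ :=
  sSup {c : ℝ | ∃ z : Fin (d + 1) → ℝ, z ≠ 0 ∧ c = (∑ i, |f z i|) / (∑ i, |z i|)}

section Aux
variable {d : ℕ}

lemma projL_apply (y z : Fin (d+1) → ℝ) (i : Fin (d+1)) :
    projL y z i = z i - (∑ j, y j)⁻¹ * (∑ j, z j) * y i := by
  simp [projL, mul_assoc]

lemma norm1_pos {z : Fin (d+1) → ℝ} (hz : z ≠ 0) : 0 < ∑ i, |z i| := by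
  obtain ⟨i, hi⟩ := Function.ne_iff.mp hz
  exact lt_of_lt_of_le (abs_pos.mpr hi)
    (Finset.single_le_sum (f := fun j => |z j|) (fun j _ => abs_nonneg _) (Finset.mem_univ i))

lemma map_eq_sum (f : (Fin (d+1) → ℝ) →ₗ[ℝ] (Fin (d+1) → ℝ)) (z : Fin (d+1) → ℝ) :
    f z = ∑ j, z j • f (Pi.single j 1) := by
  conv_lhs => rw [← Finset.univ_sum_single z]
  rw [map_sum]
  congr 1; ext j k
  have : (Pi.single j (z j) : Fin (d+1) → ℝ) = z j • (Pi.single j 1 : Fin (d+1) → ℝ) := by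
    ext k; by_cases h : k = j <;> simp [h, Pi.single_apply]
  rw [this, map_smul]

lemma norm1_bound (f : (Fin (d+1) → ℝ) →ₗ[ℝ] (Fin (d+1) → ℝ)) (z : Fin (d+1) → ℝ) :
    (∑ i, |f z i|) ≤ (∑ j, ∑ i, |f (Pi.single j 1) i|) * ∑ i, |z i| := by
  set C := ∑ j, ∑ i, |f (Pi.single j 1) i| with hC
  have h1 : ∀ i, |f z i| ≤ ∑ j, |z j| * |f (Pi.single j 1) i| := by
    intro i
    rw [map_eq_sum f z]
    calc |(∑ j, z j • f (Pi.single j 1)) i| = |∑ j, z j * f (Pi.single j 1) i| := by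
          simp [Finset.sum_apply]
      _ ≤ ∑ j, |z j * f (Pi.single j 1) i| := Finset.abs_sum_le_sum_abs _ _
      _ = ∑ j, |z j| * |f (Pi.single j 1) i| := by simp [abs_mul]
  calc (∑ i, |f z i|) ≤ ∑ i, ∑ j, |z j| * |f (Pi.single j 1) i| :=
        Finset.sum_le_sum fun i _ => h1 i
    _ = ∑ j, |z j| * ∑ i, |f (Pi.single j 1) i| := by
        rw [Finset.sum_comm]; simp [Finset.mul_sum]
    _ ≤ ∑ j, |z j| * C := by
        refine Finset.sum_le_sum fun j _ => mul_le_mul_of_nonneg_left ?_ (abs_nonneg _)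
        exact Finset.single_le_sum (f := fun j' => ∑ i, |f (Pi.single j' 1) i|)
          (fun j' _ => Finset.sum_nonneg fun i _ => abs_nonneg _) (Finset.mem_univ j)
    _ = C * ∑ i, |z i| := by rw [← Finset.sum_mul, mul_comm]

lemma opNorm1_bddAbove (f : (Fin (d+1) → ℝ) →ₗ[ℝ] (Fin (d+1) → ℝ)) :
    BddAbove {c : ℝ | ∃ z : Fin (d + 1) → ℝ, z ≠ 0 ∧ c = (∑ i, |f z i|) / (∑ i, |z i|)} := by
  refine ⟨∑ j, ∑ i, |f (Pi.single j 1) i|, ?_⟩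
  rintro c ⟨z, hz, rfl⟩
  rw [div_le_iff₀ (norm1_pos hz)]
  exact norm1_bound f z

lemma opNorm1_spec (f : (Fin (d+1) → ℝ) →ₗ[ℝ] (Fin (d+1) → ℝ)) (z : Fin (d+1) → ℝ) :
    (∑ i, |f z i|) ≤ opNorm1 f * ∑ i, |z i| := by
  rcases eq_or_ne z 0 with rfl | hz
  · simp
  · have h := le_csSup (opNorm1_bddAbove f) (show _ ∈ _ from ⟨z, hz, rfl⟩)
    rw [div_le_iff₀ (norm1_pos hz)] at h
    exact h

lemma opNorm1_nonneg (f : (Fin (d+1) → ℝ) →ₗ[ℝ] (Fin (d+1) → ℝ)) : 0 ≤ opNorm1 f := by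
  have hz : (Pi.single 0 1 : Fin (d+1) → ℝ) ≠ 0 := by
    intro h
    have := congrFun h 0
    simp at this
  have h := le_csSup (opNorm1_bddAbove f) (show _ ∈ _ from ⟨_, hz, rfl⟩)
  exact le_trans (div_nonneg (Finset.sum_nonneg fun i _ => abs_nonneg _)
    (Finset.sum_nonneg fun i _ => abs_nonneg _)) h

end Aux

section MatAux
variable {d : ℕ} (M : ℕ → Matrix (Fin (d + 1)) (Fin (d + 1)) ℤ)

lemma prodM_zero : prodM M 0 0 = 1 := by simp [prodM]

lemma prodM_succ (n : ℕ) : prodM M 0 (n + 1) = prodM M 0 n * M n := by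
  unfold prodM
  simp only [Nat.sub_zero]
  rw [show List.range' 0 (n+1) = List.range' 0 n ++ [n] by
    simpa using List.range'_concat (step := 1) (s := 0) (n := n)]
  simp

lemma prodM_nonneg (hpos : ∀ n i j, 0 ≤ M n i j) (n : ℕ) (i j : Fin (d + 1)) :
    0 ≤ prodM M 0 n i j := by
  induction n generalizing i j with
  | zero => rw [prodM_zero]; by_cases h : i = j <;> simp [Matrix.one_apply, h]
  | succ n ih =>
    rw [prodM_succ, Matrix.mul_apply]
    exact Finset.sum_nonneg fun k _ => mul_nonneg (ih i k) (hpos n k j)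

lemma prodM_det_ne_zero (hdet : ∀ n, (M n).det = 1 ∨ (M n).det = -1) (n : ℕ) :
    (prodM M 0 n).det ≠ 0 := by
  induction n with
  | zero => rw [prodM_zero]; simp
  | succ n ih =>
    rw [prodM_succ, Matrix.det_mul]
    rcases hdet n with h | h <;> simp [h, ih]

lemma prodM_col (hpos : ∀ n i j, 0 ≤ M n i j) (hdet : ∀ n, (M n).det = 1 ∨ (M n).det = -1)
    (n : ℕ) (j : Fin (d + 1)) : 1 ≤ ∑ i, prodM M 0 n i j := by
  have hne : ∃ i, prodM M 0 n i j ≠ 0 := by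
    by_contra h
    push_neg at h
    exact prodM_det_ne_zero M hdet n (Matrix.det_eq_zero_of_column_eq_zero j h)
  obtain ⟨i, hi⟩ := hne
  have h1 : 1 ≤ prodM M 0 n i j := by
    have := (prodM_nonneg M hpos n i j).lt_of_ne (Ne.symm hi)
    omega
  calc (1 : ℤ) ≤ prodM M 0 n i j := h1
    _ ≤ ∑ i, prodM M 0 n i j :=
      Finset.single_le_sum (f := fun i => prodM M 0 n i j)
        (fun k _ => prodM_nonneg M hpos n k j) (Finset.mem_univ i)

end MatAux

/-- If `Σ_n ‖π_v M_{[0,n)}‖₁` converges, then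
`⋂_n M_{[0,n)}(ℝ₊^{d+1}) = ℝ₊·v`. -/
theorem cone_intersection_of_summable {d : ℕ} (hd : 1 ≤ d)
    (M : ℕ → Matrix (Fin (d + 1)) (Fin (d + 1)) ℤ)
    (hpos : ∀ n i j, 0 ≤ M n i j)
    (hdet : ∀ n, (M n).det = 1 ∨ (M n).det = -1)
    (v : Fin (d + 1) → ℝ) (hv : ∀ i, 0 ≤ v i) (hv1 : (∑ i, |v i|) = 1)
    (hsum : Summable fun n : ℕ =>
      opNorm1 (projL v ∘ₗ ((prodM M 0 n).map (Int.cast : ℤ → ℝ)).mulVecLin)) :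
    (⋂ n : ℕ, (fun z => ((prodM M 0 n).map (Int.cast : ℤ → ℝ)).mulVec z) ''
        {z : Fin (d + 1) → ℝ | ∀ i, 0 ≤ z i}) = {w | ∃ t : ℝ, 0 ≤ t ∧ w = t • v} := by
  set A : ℕ → Matrix (Fin (d+1)) (Fin (d+1)) ℝ :=
    fun n => (prodM M 0 n).map (Int.cast : ℤ → ℝ) with hA
  -- basic facts about A
  have hA0 : A 0 = 1 := by
    rw [hA]
    simp only [prodM_zero]
    exact Matrix.map_one _ Int.cast_zero Int.cast_one
  have hApos : ∀ n i j, 0 ≤ A n i j := by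
    intro n i j
    simpa [hA, Matrix.map_apply] using (Int.cast_nonneg_iff (R := ℝ)).mpr (prodM_nonneg M hpos n i j)
  have hcol : ∀ n j, (1 : ℝ) ≤ ∑ i, A n i j := by
    intro n j
    have h := prodM_col M hpos hdet n j
    have : ((1 : ℤ) : ℝ) ≤ ((∑ i, prodM M 0 n i j : ℤ) : ℝ) := Int.cast_le.mpr h
    push_cast at this
    simpa [hA, Matrix.map_apply] using this
  have hmulpos : ∀ n (z : Fin (d+1) → ℝ), (∀ i, 0 ≤ z i) → ∀ i, 0 ≤ (A n).mulVec z i := by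
    intro n z hz i
    simp only [Matrix.mulVec, dotProduct]
    exact Finset.sum_nonneg fun j _ => mul_nonneg (hApos n i j) (hz j)
  have hsum_ge : ∀ n (z : Fin (d+1) → ℝ), (∀ i, 0 ≤ z i) →
      ∑ j, z j ≤ ∑ i, (A n).mulVec z i := by
    intro n z hz
    have heq : ∑ i, (A n).mulVec z i = ∑ j, (∑ i, A n i j) * z j := by
      simp only [Matrix.mulVec, dotProduct]
      rw [Finset.sum_comm]
      simp [Finset.sum_mul]
    rw [heq]
    refine Finset.sum_le_sum fun j _ => ?_
    nth_rewrite 1 [← one_mul (z j)]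
    exact mul_le_mul_of_nonneg_right (hcol n j) (hz j)
  have hAsucc : ∀ n, A (n+1) = A n * (M n).map (Int.cast : ℤ → ℝ) := by
    intro n
    simp only [hA, prodM_succ]
    exact Matrix.map_mul (f := Int.castRingHom ℝ)
  have hstep : ∀ n (z : Fin (d+1) → ℝ), (∀ i, 0 ≤ z i) →
      ∃ z' : Fin (d+1) → ℝ, (∀ i, 0 ≤ z' i) ∧ (A n).mulVec z' = (A (n+1)).mulVec z := by
    intro n z hz
    refine ⟨((M n).map (Int.cast : ℤ → ℝ)).mulVec z, ?_, ?_⟩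
    · intro i
      simp only [Matrix.mulVec, dotProduct]
      refine Finset.sum_nonneg fun j _ => mul_nonneg ?_ (hz j)
      simpa [Matrix.map_apply] using (Int.cast_nonneg_iff (R := ℝ)).mpr (hpos n i j)
    · rw [hAsucc n, ← Matrix.mulVec_mulVec]
  have hv1' : ∑ j, v j = 1 := by
    rw [← hv1]
    exact Finset.sum_congr rfl fun j _ => (abs_of_nonneg (hv j)).symm
  -- the key convergence lemma
  have key : ∀ w : Fin (d+1) → ℝ,
      (∀ n, ∃ z, (∀ i, 0 ≤ z i) ∧ (A n).mulVec z = w) →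
      ∀ i, w i = (∑ k, w k) * v i := by
    intro w hw
    have hb : ∀ n, ∑ i, |projL v w i| ≤
        opNorm1 (projL v ∘ₗ (A n).mulVecLin) * ∑ k, w k := by
      intro n
      obtain ⟨z, hz, hze⟩ := hw n
      have h1 : ∑ i, |projL v w i| = ∑ i, |(projL v ∘ₗ (A n).mulVecLin) z i| := by
        simp only [LinearMap.comp_apply, Matrix.mulVecLin_apply, hze]
      rw [h1]
      calc ∑ i, |(projL v ∘ₗ (A n).mulVecLin) z i|
          ≤ opNorm1 (projL v ∘ₗ (A n).mulVecLin) * ∑ i, |z i| := opNorm1_spec _ _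
        _ = opNorm1 (projL v ∘ₗ (A n).mulVecLin) * ∑ i, z i := by
            congr 1
            exact Finset.sum_congr rfl fun i _ => abs_of_nonneg (hz i)
        _ ≤ opNorm1 (projL v ∘ₗ (A n).mulVecLin) * ∑ k, w k := by
            refine mul_le_mul_of_nonneg_left ?_ (opNorm1_nonneg _)
            have := hsum_ge n z hz
            rwa [show ∑ i, (A n).mulVec z i = ∑ k, w k by rw [hze]] at this
    have ht : Filter.Tendsto (fun n => opNorm1 (projL v ∘ₗ (A n).mulVecLin) * ∑ k, w k)
        Filter.atTop (nhds 0) := by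
      have h0 := hsum.tendsto_atTop_zero
      simpa using h0.mul_const (∑ k, w k)
    have hle : ∑ i, |projL v w i| ≤ 0 :=
      ge_of_tendsto ht (Filter.Eventually.of_forall hb)
    have hproj0 : ∀ i, projL v w i = 0 := by
      intro i
      have h2 : |projL v w i| ≤ 0 :=
        le_trans (Finset.single_le_sum (f := fun k => |projL v w k|)
          (fun k _ => abs_nonneg _) (Finset.mem_univ i)) hle
      exact abs_eq_zero.mp (le_antisymm h2 (abs_nonneg _))
    intro i
    have h3 := hproj0 i
    rw [projL_apply, hv1'] at h3
    simp at h3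
    linarith
  -- compactness: v itself lies in every image
  set S : ℕ → Set (Fin (d+1) → ℝ) :=
    fun n => {z | (∀ i, 0 ≤ z i) ∧ ∑ i, (A n).mulVec z i = 1} with hS
  set K : ℕ → Set (Fin (d+1) → ℝ) :=
    fun n => (fun z => (A n).mulVec z) '' S n with hK
  have hcont : ∀ n, Continuous fun z : Fin (d+1) → ℝ => (A n).mulVec z := by
    intro n
    exact LinearMap.continuous_on_pi (A n).mulVecLin
  have hScompact : ∀ n, IsCompact (S n) := by
    intro n
    have hclosed : IsClosed (S n) := by
      have h1 : IsClosed {z : Fin (d+1) → ℝ | ∀ i, 0 ≤ z i} := by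
        rw [Set.setOf_forall]
        exact isClosed_iInter fun i => isClosed_le continuous_const (continuous_apply i)
      have hc2 : Continuous fun z : Fin (d+1) → ℝ => ∑ i, (A n).mulVec z i :=
        continuous_finset_sum _ fun i _ => (continuous_apply i).comp (hcont n)
      have h2 : IsClosed {z : Fin (d+1) → ℝ | ∑ i, (A n).mulVec z i = 1} :=
        isClosed_eq hc2 continuous_const
      exact h1.inter h2
    refine IsCompact.of_isClosed_subset (isCompact_Icc (a := (0 : Fin (d+1) → ℝ)) (b := 1))
      hclosed ?_
    rintro z ⟨hz, he⟩
    constructor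
    · intro i; exact hz i
    · intro j
      have h1 : z j ≤ ∑ i, z i :=
        Finset.single_le_sum (f := fun i => z i) (fun i _ => hz i) (Finset.mem_univ j)
      have h2 := hsum_ge n z hz
      rw [he] at h2
      exact le_trans h1 h2
  have hKcompact : ∀ n, IsCompact (K n) := fun n => (hScompact n).image (hcont n)
  have hKne : ∀ n, (K n).Nonempty := by
    intro n
    set c : ℝ := ∑ i, A n i 0 with hc
    have hc1 : (1 : ℝ) ≤ c := hcol n 0
    have hc0 : c ≠ 0 := by linarith
    set z : Fin (d+1) → ℝ := c⁻¹ • (Pi.single 0 1 : Fin (d+1) → ℝ) with hzdef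
    have hsingle : (A n).mulVec (Pi.single 0 1 : Fin (d+1) → ℝ) = fun i => A n i 0 := by
      funext i
      simp [Matrix.mulVec, dotProduct, Pi.single_apply]
    refine ⟨(A n).mulVec z, ⟨z, ⟨?_, ?_⟩, rfl⟩⟩
    · intro i
      simp only [hzdef, Pi.smul_apply, smul_eq_mul]
      refine mul_nonneg (inv_nonneg.mpr (by linarith)) ?_
      by_cases h : i = 0 <;> simp [h, Pi.single_apply]
    · rw [hzdef, Matrix.mulVec_smul, hsingle]
      simp only [Pi.smul_apply, smul_eq_mul]
      rw [← Finset.mul_sum, ← hc, inv_mul_cancel₀ hc0]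
  have hKmono : ∀ n, K (n+1) ⊆ K n := by
    intro n x hx
    obtain ⟨z, ⟨hz, he⟩, rfl⟩ := hx
    obtain ⟨z', hz', he'⟩ := hstep n z hz
    exact ⟨z', ⟨hz', by rw [he']; exact he⟩, he'⟩
  have hInter : (⋂ n, K n).Nonempty :=
    IsCompact.nonempty_iInter_of_sequence_nonempty_isCompact_isClosed K hKmono hKne
      (hKcompact 0) (fun n => (hKcompact n).isClosed)
  obtain ⟨x, hx⟩ := hInter
  have hx' : ∀ n, x ∈ K n := Set.mem_iInter.mp hx
  have hxw : ∀ n, ∃ z, (∀ i, 0 ≤ z i) ∧ (A n).mulVec z = x := by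
    intro n
    obtain ⟨z, ⟨hz, _⟩, he⟩ := hx' n
    exact ⟨z, hz, he⟩
  have hxsum : ∑ k, x k = 1 := by
    obtain ⟨z, ⟨_, he⟩, heq⟩ := hx' 0
    rw [← heq]; exact he
  have hxv : x = v := by
    funext i
    have := key x hxw i
    rw [hxsum, one_mul] at this
    exact this
  have hvmem : ∀ n, ∃ z, (∀ i, 0 ≤ z i) ∧ (A n).mulVec z = v := by
    intro n
    obtain ⟨z, hz, he⟩ := hxw n
    exact ⟨z, hz, by rw [he, hxv]⟩
  -- final assembly
  ext w
  simp only [Set.mem_iInter, Set.mem_image, Set.mem_setOf_eq]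
  constructor
  · intro h
    have hw : ∀ n, ∃ z, (∀ i, 0 ≤ z i) ∧ (A n).mulVec z = w := fun n => h n
    have hwpos : ∀ i, 0 ≤ w i := by
      obtain ⟨z, hz, he⟩ := hw 0
      intro i
      rw [← he, hA0, Matrix.one_mulVec]
      exact hz i
    refine ⟨∑ k, w k, Finset.sum_nonneg fun k _ => hwpos k, ?_⟩
    funext i
    rw [key w hw i]
    simp
  · rintro ⟨t, ht, rfl⟩ n
    obtain ⟨z, hz, he⟩ := hvmem n
    exact ⟨t • z, fun i => mul_nonneg ht (hz i), by rw [Matrix.mulVec_smul, he]⟩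
end

section
/- Let v ∈ ℝ^{d+1} have nonnegative coordinates with ‖v‖₁ = 1, and let N be any (d+1)×(d+1) real matrix. Then ‖π_v N‖₁ ≤ (d+1) · sup{ ‖φN‖_∞ : φ ∈ (ℝ^{d+1})*, φ(v) = 0, ‖φ‖_∞ ≤ 1 }, where ‖π_v N‖₁ is the operator norm of π_v∘N induced by the ℓ¹ norm on ℝ^{d+1}. -/
/-- The sup norm `‖z‖_∞ = max_i |z i|`. -/
noncomputable def normInf {d : ℕ} (z : Fin (d + 1) → ℝ) : ℝ :=
  ⨆ i, |z i|

lemma abs_le_normInf {d : ℕ} (z : Fin (d + 1) → ℝ) (j : Fin (d + 1)) :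
    |z j| ≤ normInf z :=
  le_ciSup (f := fun i => |z i|) (Set.Finite.bddAbove (Set.finite_range _)) j

lemma normInf_le {d : ℕ} (z : Fin (d + 1) → ℝ) (c : ℝ) (h : ∀ j, |z j| ≤ c) :
    normInf z ≤ c :=
  ciSup_le h

/-- `‖π_v N‖₁ ≤ (d+1) · sup {‖φN‖_∞ : φ(v) = 0, ‖φ‖_∞ ≤ 1}`. -/
theorem opNorm_proj_le_dual_bound {d : ℕ} (hd : 1 ≤ d)
    (v : Fin (d + 1) → ℝ) (hv : ∀ i, 0 ≤ v i) (hv1 : (∑ i, |v i|) = 1)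
    (N : Matrix (Fin (d + 1)) (Fin (d + 1)) ℝ) :
    opNorm1 (projL v ∘ₗ N.mulVecLin) ≤
      ((d : ℝ) + 1) * sSup {c : ℝ | ∃ φ : Fin (d + 1) → ℝ,
        dotProduct φ v = 0 ∧ normInf φ ≤ 1 ∧ c = normInf (Matrix.vecMul φ N)} := by
  classical
  set T := {c : ℝ | ∃ φ : Fin (d + 1) → ℝ,
        dotProduct φ v = 0 ∧ normInf φ ≤ 1 ∧ c = normInf (Matrix.vecMul φ N)}
    with hTdef
  have hsum_v : ∑ i, v i = 1 := by
    rw [← hv1]; exact Finset.sum_congr rfl fun i _ => (abs_of_nonneg (hv i)).symm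
  have hvecMul : ∀ (φ : Fin (d + 1) → ℝ) (j), Matrix.vecMul φ N j = ∑ i, φ i * N i j := by
    intro φ j; simp [Matrix.vecMul, dotProduct]
  have hT0 : (0 : ℝ) ∈ T := by
    refine ⟨0, by simp [dotProduct], ?_, ?_⟩
    · simp [normInf]
    · simp [normInf, Matrix.zero_vecMul]
  have hbdd : BddAbove T := by
    refine ⟨∑ i, ∑ j, |N i j|, ?_⟩
    rintro c ⟨φ, hφv, hφ1, rfl⟩
    refine normInf_le _ _ fun j => ?_
    rw [hvecMul]
    calc |∑ i, φ i * N i j| ≤ ∑ i, |φ i * N i j| := Finset.abs_sum_le_sum_abs _ _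
      _ ≤ ∑ i, |N i j| := by
          refine Finset.sum_le_sum fun i _ => ?_
          rw [abs_mul]
          calc |φ i| * |N i j| ≤ 1 * |N i j| :=
                mul_le_mul_of_nonneg_right
                  (le_trans (abs_le_normInf φ i) hφ1) (abs_nonneg _)
            _ = |N i j| := one_mul _
      _ ≤ ∑ i, ∑ j', |N i j'| := by
          refine Finset.sum_le_sum fun i _ => ?_
          exact Finset.single_le_sum (f := fun j' => |N i j'|) (fun j' _ => abs_nonneg _) (Finset.mem_univ j)
  have hS0 : 0 ≤ sSup T := le_csSup hbdd hT0
  rw [opNorm1]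
  apply Real.sSup_le
  · rintro c ⟨z, hz, rfl⟩
    have hz' : 0 < ∑ j, |z j| := by
      obtain ⟨j, hj⟩ := Function.ne_iff.mp hz
      exact Finset.sum_pos' (fun i _ => abs_nonneg _) ⟨j, Finset.mem_univ j, abs_pos.mpr hj⟩
    rw [div_le_iff₀ hz']
    set u : Fin (d + 1) → ℝ := N.mulVec z with hu
    have hfz : ∀ i, (projL v ∘ₗ N.mulVecLin) z i = u i - (∑ k, u k) * v i := by
      intro i
      simp [projL, Matrix.mulVecLin_apply, hsum_v, hu, LinearMap.sum_apply]
    set w : Fin (d + 1) → ℝ := fun i => u i - (∑ k, u k) * v i with hwdef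
    have hsw : ∑ i, w i = 0 := by
      simp only [hwdef]
      rw [Finset.sum_sub_distrib, ← Finset.mul_sum, hsum_v, mul_one, sub_self]
    set s : Fin (d + 1) → ℝ := fun i => if 0 ≤ w i then 1 else -1 with hsdef
    have hsw' : ∀ i, s i * w i = |w i| := by
      intro i
      by_cases h : 0 ≤ w i
      · simp [hsdef, h, abs_of_nonneg h]
      · simp [hsdef, h, abs_of_neg (lt_of_not_ge h)]
    have hsabs : ∀ i, |s i| = 1 := by
      intro i; by_cases h : 0 ≤ w i <;> simp [hsdef, h]
    set t : ℝ := ∑ k, s k * v k with htdef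
    have ht1 : |t| ≤ 1 := by
      rw [htdef]
      calc |∑ k, s k * v k| ≤ ∑ k, |s k * v k| := Finset.abs_sum_le_sum_abs _ _
        _ = ∑ k, v k := by
            refine Finset.sum_congr rfl fun k _ => ?_
            rw [abs_mul, hsabs, one_mul, abs_of_nonneg (hv k)]
        _ = 1 := hsum_v
    set φ : Fin (d + 1) → ℝ := fun i => (s i - t) / 2 with hφdef
    have hφv : dotProduct φ v = 0 := by
      simp only [dotProduct, hφdef]
      have h1 : ∑ i, (s i - t) / 2 * v i = (∑ i, (s i * v i - t * v i)) / 2 := by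
        rw [Finset.sum_div]
        exact Finset.sum_congr rfl fun i _ => by ring
      rw [h1, Finset.sum_sub_distrib, ← Finset.mul_sum, hsum_v, ← htdef]
      ring
    have hφ1 : normInf φ ≤ 1 := by
      refine normInf_le _ _ fun j => ?_
      simp only [hφdef]
      rw [abs_div, abs_two]
      rw [div_le_iff₀ (by norm_num : (0:ℝ) < 2)]
      calc |s j - t| ≤ |s j| + |t| := abs_sub _ _
        _ ≤ 1 + 1 := add_le_add (le_of_eq (hsabs j)) ht1
        _ = 1 * 2 := by ring
    have hmem : normInf (Matrix.vecMul φ N) ∈ T := ⟨φ, hφv, hφ1, rfl⟩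
    have hφT : normInf (Matrix.vecMul φ N) ≤ sSup T := le_csSup hbdd hmem
    -- key chain
    have key : ∑ i, |w i| ≤ 2 * (sSup T * ∑ j, |z j|) := by
      have e1 : ∑ i, |w i| = 2 * ∑ i, φ i * w i := by
        rw [Finset.mul_sum]
        have : ∀ i, 2 * (φ i * w i) = s i * w i - t * w i := by
          intro i; simp only [hφdef]; ring
        rw [Finset.sum_congr rfl fun i _ => this i]
        rw [Finset.sum_sub_distrib, ← Finset.mul_sum, hsw, mul_zero, sub_zero]
        exact (Finset.sum_congr rfl fun i _ => (hsw' i).symm)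
      have e2 : ∑ i, φ i * w i = ∑ i, φ i * u i := by
        have : ∀ i, φ i * w i = φ i * u i - (∑ k, u k) * (φ i * v i) := by
          intro i; simp only [hwdef]; ring
        rw [Finset.sum_congr rfl fun i _ => this i, Finset.sum_sub_distrib,
          ← Finset.mul_sum]
        have : ∑ i, φ i * v i = 0 := hφv
        rw [this, mul_zero, sub_zero]
      have e3 : ∑ i, φ i * u i = ∑ j, Matrix.vecMul φ N j * z j := by
        have h2 : ∀ j, Matrix.vecMul φ N j * z j = ∑ i, φ i * N i j * z j := by
          intro j; rw [hvecMul, Finset.sum_mul]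
        rw [Finset.sum_congr rfl fun j _ => h2 j, Finset.sum_comm]
        refine Finset.sum_congr rfl fun i _ => ?_
        simp only [hu, Matrix.mulVec, dotProduct, Finset.mul_sum]
        exact Finset.sum_congr rfl fun j _ => by ring
      have e4 : ∑ j, Matrix.vecMul φ N j * z j ≤ sSup T * ∑ j, |z j| := by
        calc ∑ j, Matrix.vecMul φ N j * z j ≤ ∑ j, |Matrix.vecMul φ N j * z j| :=
              Finset.sum_le_sum fun j _ => le_abs_self _
          _ ≤ ∑ j, sSup T * |z j| := by
              refine Finset.sum_le_sum fun j _ => ?_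
              rw [abs_mul]
              exact mul_le_mul_of_nonneg_right
                (le_trans (abs_le_normInf _ j) hφT) (abs_nonneg _)
          _ = sSup T * ∑ j, |z j| := (Finset.mul_sum _ _ _).symm
      calc ∑ i, |w i| = 2 * ∑ j, Matrix.vecMul φ N j * z j := by rw [e1, e2, e3]
        _ ≤ 2 * (sSup T * ∑ j, |z j|) := mul_le_mul_of_nonneg_left e4 (by norm_num)
    have hfw : ∑ i, |(projL v ∘ₗ N.mulVecLin) z i| = ∑ i, |w i| :=
      Finset.sum_congr rfl fun i _ => by rw [hfz i]
    rw [hfw]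
    calc ∑ i, |w i| ≤ 2 * (sSup T * ∑ j, |z j|) := key
      _ ≤ ((d : ℝ) + 1) * (sSup T * ∑ j, |z j|) := by
          refine mul_le_mul_of_nonneg_right ?_ (mul_nonneg hS0 (le_of_lt hz'))
          have : (1 : ℝ) ≤ (d : ℝ) := by exact_mod_cast hd
          linarith
      _ = ((d : ℝ) + 1) * sSup T * ∑ j, |z j| := by ring
  · exact mul_nonneg (by positivity) hS0
end
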